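/- Let L be an even lattice of level N and let ℓ ∈ L be a primitive isotropic vector such that (ℓ, L) = NZ. Choose ℓ' ∈ L' with (ℓ', ℓ) = 1 and set ℓ̃ = N(ℓ' - Q(ℓ')ℓ). Then ℓ̃ is an isotropic vector of L with (ℓ̃, ℓ) = N, and L splits as an orthogonal direct sum L = K ⊕ (Zℓ̃ + Zℓ) where K = L ∩ ℓ^⊥ ∩ ℓ̃^⊥; in particular the sublattice Zℓ̃ + Zℓ is isometric to U(N), the hyperbolic plane rescaled by N. -/
import Mathlib


/-- Let `L` be an even lattice of level `N` and `ℓ ∈ L` primitive isotropic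
with `(ℓ, L) = Nℤ`.  Choosing `ℓ' ∈ L'` with `(ℓ',ℓ) = 1` and setting
`ℓ̃ = N(ℓ' - Q(ℓ')ℓ)`, the vector `ℓ̃` lies in `L`, is isotropic, satisfies
`(ℓ̃,ℓ) = N`, and `L` splits as `K ⊕ (ℤℓ̃ + ℤℓ)` with
`K = L ∩ ℓ^⊥ ∩ ℓ̃^⊥`; the Gram matrix relations `Q(ℓ) = Q(ℓ̃) = 0`,
`(ℓ̃,ℓ) = N` show that `ℤℓ̃ + ℤℓ` is isometric to `U(N)`. -/
theorem stmt_9 {V : Type*} [AddCommGroup V] [Module ℚ V]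
    (B : V →ₗ[ℚ] V →ₗ[ℚ] ℚ)
    (hsymm : ∀ x y : V, B x y = B y x)
    (hnd : ∀ x : V, (∀ y : V, B x y = 0) → x = 0)
    (L : Submodule ℤ V) (hfg : L.FG)
    (hspan : Submodule.span ℚ (L : Set V) = ⊤)
    (hint : ∀ x ∈ L, ∀ y ∈ L, ∃ n : ℤ, B x y = (n : ℚ))
    (heven : ∀ x ∈ L, ∃ n : ℤ, B x x = 2 * (n : ℚ))
    (N : ℕ) (hNpos : 0 < N)
    -- level properties of `L`:
    (hlev : ∀ x : V, (∀ y ∈ L, ∃ n : ℤ, B x y = (n : ℚ)) →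
      ∃ n : ℤ, (N : ℚ) * (B x x / 2) = (n : ℚ))
    (hNdual : ∀ x : V, (∀ y ∈ L, ∃ n : ℤ, B x y = (n : ℚ)) → (N : ℚ) • x ∈ L)
    -- `ℓ ∈ L` primitive isotropic with `(ℓ, L) = Nℤ`:
    (l : V) (hl : l ∈ L) (hliso : B l l = 0)
    (hlprim : ∀ (a : ℤ) (x : V), x ∈ L → l = a • x → a = 1 ∨ a = -1)
    (hlN : ∀ x ∈ L, ∃ n : ℤ, B l x = (N : ℚ) * (n : ℚ))
    (hlNsurj : ∃ x ∈ L, B l x = (N : ℚ))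
    -- `ℓ' ∈ L'` with `(ℓ',ℓ) = 1`:
    (l' : V) (hl' : ∀ y ∈ L, ∃ n : ℤ, B l' y = (n : ℚ)) (hl'l : B l' l = 1)
    (lt : V) (hlt : lt = (N : ℚ) • l' - ((N : ℚ) * (B l' l' / 2)) • l) :
    lt ∈ L ∧ B lt lt = 0 ∧ B lt l = (N : ℚ) ∧
      ∀ x ∈ L, ∃! ab : ℤ × ℤ,
        x - (ab.1 • lt + ab.2 • l) ∈ L ∧
        B (x - (ab.1 • lt + ab.2 • l)) l = 0 ∧
        B (x - (ab.1 • lt + ab.2 • l)) lt = 0 := by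

  obtain ⟨k, hk⟩ := hlev l' hl'
  have hllp : B l l' = 1 := by rw [hsymm]; exact hl'l
  have hNne : (N : ℚ) ≠ 0 := by exact_mod_cast hNpos.ne'
  -- membership
  have hltmem : lt ∈ L := by
    have h1 : (N : ℚ) • l' ∈ L := hNdual l' hl'
    have h2 : ((N : ℚ) * (B l' l' / 2)) • l ∈ L := by
      rw [hk, show ((k : ℚ)) • l = k • l from Int.cast_smul_eq_zsmul ℚ k l]
      exact L.smul_mem k hl
    rw [hlt]; exact L.sub_mem h1 h2
  -- values
  have hltl : B lt l = (N : ℚ) := by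
    rw [hlt]; simp [map_sub, map_smul, hl'l, hliso]
  have hltlt : B lt lt = 0 := by
    rw [hlt]
    simp only [map_sub, map_smul, LinearMap.sub_apply, LinearMap.smul_apply,
      smul_eq_mul, hl'l, hllp, hliso]
    ring
  refine ⟨hltmem, hltlt, hltl, ?_⟩
  intro x hx
  obtain ⟨n, hn⟩ := hlN x hx
  obtain ⟨m, hm⟩ := hl' x hx
  have hltx : B lt x = (N : ℚ) * m - (k : ℚ) * ((N : ℚ) * n) := by
    rw [hlt]
    simp only [map_sub, map_smul, LinearMap.sub_apply, LinearMap.smul_apply,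
      smul_eq_mul, hm, hn, ← hk]
    try ring
  have key : ∀ (a b : ℤ),
      B (x - (a • lt + b • l)) = B x - (a : ℚ) • B lt - (b : ℚ) • B l := by
    intro a b
    have : x - (a • lt + b • l) = x - (a : ℚ) • lt - (b : ℚ) • l := by
      rw [Int.cast_smul_eq_zsmul, Int.cast_smul_eq_zsmul]; abel
    rw [this]; simp [map_sub, map_smul]; try abel
  have keyl : ∀ (a b : ℤ), B (x - (a • lt + b • l)) l
      = (N : ℚ) * n - (a : ℚ) * N := by
    intro a b
    rw [key a b]
    simp only [LinearMap.sub_apply, LinearMap.smul_apply, smul_eq_mul,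
      hltl, hliso, hsymm x l, hn]
    try ring
  have keylt : ∀ (a b : ℤ), B (x - (a • lt + b • l)) lt
      = ((N : ℚ) * m - (k : ℚ) * ((N : ℚ) * n)) - (b : ℚ) * N := by
    intro a b
    rw [key a b]
    simp only [LinearMap.sub_apply, LinearMap.smul_apply, smul_eq_mul,
      hltlt, hsymm x lt, hsymm l lt, hltl, hltx]
    try ring
  refine ⟨(n, m - k * n), ⟨?_, ?_, ?_⟩, ?_⟩
  · exact L.sub_mem hx (L.add_mem (L.smul_mem _ hltmem) (L.smul_mem _ hl))
  · rw [keyl]; ring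
  · rw [keylt]; push_cast; ring
  · rintro ⟨a, b⟩ ⟨-, h1, h2⟩
    have ha : (a : ℚ) = n := by
      rw [keyl] at h1
      have h1' : (a : ℚ) * N = (n : ℚ) * N := by linarith
      exact mul_right_cancel₀ hNne h1'
    have hb : (b : ℚ) = (m : ℚ) - k * n := by
      rw [keylt] at h2
      have h2' : (b : ℚ) * N = ((m : ℚ) - k * n) * N := by ring_nf; ring_nf at h2; linarith
      exact mul_right_cancel₀ hNne h2'
    have ha' : a = n := by exact_mod_cast ha
    have hb' : b = m - k * n := by exact_mod_cast hb
    simp [ha', hb']
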